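/- arXiv:2203.08000 — 2 statements merged into one kernel-verified Lean document; each statement's English description precedes it below -/
import Mathlib

section
/- Let (f_1, …, f_10) be a 10-tuple of vectors in E₁₀ such that ⟨f_i, f_j⟩ = 1 − δ_ij for all i, j. Then for every vector v ∈ E₁₀, the integer ⟨v, f_1 + f_2 + ⋯ + f_10⟩ is divisible by 3. (Corollary 2.5, first part.) -/
open Matrix BigOperators

/-- The Gram matrix of the even unimodular hyperbolic lattice `E₁₀ = U ⊕ E₈(−1)`:
indices 0,1 span the hyperbolic plane `U`, and indices 2,…,9 carry the negative
definite `E₈` form (diagonal `−2`, entry `1` for vertices adjacent in the `E₈`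
Dynkin diagram). -/
def E10Gram : Matrix (Fin 10) (Fin 10) ℤ :=
  !![0, 1,  0,  0,  0,  0,  0,  0,  0,  0;
     1, 0,  0,  0,  0,  0,  0,  0,  0,  0;
     0, 0, -2,  1,  0,  0,  0,  0,  0,  0;
     0, 0,  1, -2,  1,  0,  0,  0,  0,  0;
     0, 0,  0,  1, -2,  1,  0,  0,  0,  1;
     0, 0,  0,  0,  1, -2,  1,  0,  0,  0;
     0, 0,  0,  0,  0,  1, -2,  1,  0,  0;
     0, 0,  0,  0,  0,  0,  1, -2,  1,  0;
     0, 0,  0,  0,  0,  0,  0,  1, -2,  0;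
     0, 0,  0,  0,  1,  0,  0,  0,  0, -2]

/-- The symmetric bilinear form on `E₁₀ = ℤ¹⁰` with Gram matrix `E10Gram`. -/
def E10Pair (v w : Fin 10 → ℤ) : ℤ := ∑ i, ∑ j, v i * E10Gram i j * w j


/-- An explicit integer inverse of `E10Gram`, witnessing unimodularity. -/
def E10Inv : Matrix (Fin 10) (Fin 10) ℤ :=
  !![0, 1,  0,  0,  0,  0,  0,  0,  0,  0;
     1, 0,  0,  0,  0,  0,  0,  0,  0,  0;
     0, 0, -4, -7, -10, -8, -6, -4, -2, -5;
     0, 0, -7, -14, -20, -16, -12, -8, -4, -10;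
     0, 0, -10, -20, -30, -24, -18, -12, -6, -15;
     0, 0, -8, -16, -24, -20, -15, -10, -5, -12;
     0, 0, -6, -12, -18, -15, -12, -8, -4, -9;
     0, 0, -4, -8, -12, -10, -8, -6, -3, -6;
     0, 0, -2, -4, -6, -5, -4, -3, -2, -3;
     0, 0, -5, -10, -15, -12, -9, -6, -3, -8]

/-- The matrix `J - I` of inner products `⟨f i, f j⟩ = 1 - δ_ij`. -/
def Mdelta : Matrix (Fin 10) (Fin 10) ℤ := Matrix.of fun i j => 1 - if i = j then 1 else 0

/-- Left transform for the Smith normal form of `Mdelta`. -/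
def SA : Matrix (Fin 10) (Fin 10) ℤ :=
  !![1, 0, 0, 0, 0, 0, 0, 0, 0, 0;
     0, 1, 0, 0, 0, 0, 0, 0, 0, 0;
     1, 1, -1, 0, 0, 0, 0, 0, 0, 0;
     1, 1, -2, 1, 0, 0, 0, 0, 0, 0;
     1, 1, -3, 1, 1, 0, 0, 0, 0, 0;
     1, 1, -4, 1, 1, 1, 0, 0, 0, 0;
     1, 1, -5, 1, 1, 1, 1, 0, 0, 0;
     1, 1, -6, 1, 1, 1, 1, 1, 0, 0;
     1, 1, -7, 1, 1, 1, 1, 1, 1, 0;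
     1, 1, -8, 1, 1, 1, 1, 1, 1, 1]

/-- Right transform for the Smith normal form of `Mdelta`. -/
def SB : Matrix (Fin 10) (Fin 10) ℤ :=
  !![0, 1, -1, 0, 0, 0, 0, 0, 0, 1;
     1, 0, -1, 0, 0, 0, 0, 0, 0, 1;
     0, 0, 0, 0, 0, 0, 0, 0, 0, 1;
     0, 0, 1, -1, 0, 0, 0, 0, 0, 1;
     0, 0, 0, 1, -1, 0, 0, 0, 0, 1;
     0, 0, 0, 0, 1, -1, 0, 0, 0, 1;
     0, 0, 0, 0, 0, 1, -1, 0, 0, 1;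
     0, 0, 0, 0, 0, 0, 1, -1, 0, 1;
     0, 0, 0, 0, 0, 0, 0, 1, -1, 1;
     0, 0, 0, 0, 0, 0, 0, 0, 1, -8]

/-- An explicit inverse of `SA`. -/
def SAi : Matrix (Fin 10) (Fin 10) ℤ :=
  !![1, 0, 0, 0, 0, 0, 0, 0, 0, 0;
     0, 1, 0, 0, 0, 0, 0, 0, 0, 0;
     1, 1, -1, 0, 0, 0, 0, 0, 0, 0;
     1, 1, -2, 1, 0, 0, 0, 0, 0, 0;
     1, 1, -1, -1, 1, 0, 0, 0, 0, 0;
     1, 1, -1, 0, -1, 1, 0, 0, 0, 0;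
     1, 1, -1, 0, 0, -1, 1, 0, 0, 0;
     1, 1, -1, 0, 0, 0, -1, 1, 0, 0;
     1, 1, -1, 0, 0, 0, 0, -1, 1, 0;
     1, 1, -1, 0, 0, 0, 0, 0, -1, 1]

/-- An explicit inverse of `SB`. -/
def SBi : Matrix (Fin 10) (Fin 10) ℤ :=
  !![0, 1, 1, 1, 1, 1, 1, 1, 1, 1;
     1, 0, 1, 1, 1, 1, 1, 1, 1, 1;
     0, 0, 2, 1, 1, 1, 1, 1, 1, 1;
     0, 0, 3, 0, 1, 1, 1, 1, 1, 1;
     0, 0, 4, 0, 0, 1, 1, 1, 1, 1;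
     0, 0, 5, 0, 0, 0, 1, 1, 1, 1;
     0, 0, 6, 0, 0, 0, 0, 1, 1, 1;
     0, 0, 7, 0, 0, 0, 0, 0, 1, 1;
     0, 0, 8, 0, 0, 0, 0, 0, 0, 1;
     0, 0, 1, 0, 0, 0, 0, 0, 0, 0]

section Abstract
variable {n : Type*} [Fintype n] [DecidableEq n]

lemma unit_det {X Xi : Matrix n n ℤ} (h : X * Xi = 1) : X.det = 1 ∨ X.det = -1 := by
  have h1 : X.det * Xi.det = 1 := by rw [← Matrix.det_mul, h, Matrix.det_one]
  exact Int.isUnit_iff.mp (IsUnit.of_mul_eq_one _ h1)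

lemma master {G F Md Gi A B Ai Bi : Matrix n n ℤ} {d : n → ℤ}
    (hGi : G * Gi = 1)
    (hAMB : A * Md * B = Matrix.diagonal d) (hprod : ∏ i, d i = 9)
    (hA : A * Ai = 1) (hB : B * Bi = 1)
    (hM : F * G * Fᵀ = Md)
    (hMd1 : Md *ᵥ (fun _ => 1) = fun _ => 9)
    (v : n → ℤ) :
    (3 : ℤ) ∣ v ⬝ᵥ (G *ᵥ (Fᵀ *ᵥ fun _ => 1)) := by
  have hMdet : Md.det = 9 ∨ Md.det = -9 := by
    have h : A.det * Md.det * B.det = 9 := by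
      have := congrArg Matrix.det hAMB
      rwa [Matrix.det_mul, Matrix.det_mul, Matrix.det_diagonal, hprod] at this
    rcases unit_det hA with hA' | hA' <;> rcases unit_det hB with hB' | hB' <;>
      rw [hA', hB'] at h <;> [left; right; right; left] <;> linarith
  have hdet : F.det * G.det * F.det = Md.det := by
    have := congrArg Matrix.det hM
    rwa [Matrix.det_mul, Matrix.det_mul, Matrix.det_transpose] at this
  have hF9 : F.det * F.det = 9 := by
    rcases hMdet with hMd | hMd <;> rcases unit_det hGi with h | h <;>
      rw [hMd, h] at hdet <;> nlinarith [mul_self_nonneg F.det]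
  have hF3 : F.det = 3 ∨ F.det = -3 := by
    have h : (F.det - 3) * (F.det + 3) = 0 := by nlinarith
    rcases mul_eq_zero.mp h with h | h
    · exact Or.inl (by linarith)
    · exact Or.inr (by linarith)
  set u : n → ℤ := (adjugate F)ᵀ *ᵥ v with hu
  have hFadj : Fᵀ * (adjugate F)ᵀ = F.det • 1 := by
    rw [← Matrix.transpose_mul, Matrix.adjugate_mul, Matrix.transpose_smul, Matrix.transpose_one]
  have hsmul : Fᵀ *ᵥ u = F.det • v := by
    rw [hu, Matrix.mulVec_mulVec, hFadj, Matrix.smul_mulVec, Matrix.one_mulVec]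
  have key : F.det * (v ⬝ᵥ (G *ᵥ (Fᵀ *ᵥ fun _ => 1))) = 9 * ∑ i, u i := by
    calc F.det * (v ⬝ᵥ (G *ᵥ (Fᵀ *ᵥ fun _ => 1)))
        = (F.det • v) ⬝ᵥ (G *ᵥ Fᵀ *ᵥ fun _ => 1) := by
          rw [smul_dotProduct, smul_eq_mul]
      _ = (Fᵀ *ᵥ u) ⬝ᵥ (G *ᵥ Fᵀ *ᵥ fun _ => 1) := by rw [hsmul]
      _ = u ⬝ᵥ (F *ᵥ G *ᵥ Fᵀ *ᵥ fun _ => 1) := by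
          rw [Matrix.mulVec_transpose, ← Matrix.dotProduct_mulVec]
      _ = u ⬝ᵥ ((F * G * Fᵀ) *ᵥ fun _ => 1) := by
          rw [Matrix.mulVec_mulVec, Matrix.mulVec_mulVec]
      _ = u ⬝ᵥ (fun _ => 9) := by rw [hM, hMd1]
      _ = 9 * ∑ i, u i := by
          simp only [dotProduct]
          rw [← Finset.sum_mul, mul_comm]
  rcases hF3 with h | h
  · rw [h] at key
    exact ⟨∑ i, u i, by linarith⟩
  · rw [h] at key
    exact ⟨-∑ i, u i, by linarith⟩

end Abstract

lemma E10Gram_mul_inv : E10Gram * E10Inv = 1 := by decide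
lemma SA_mul_SAi : SA * SAi = 1 := by decide
lemma SB_mul_SBi : SB * SBi = 1 := by decide
lemma SA_Mdelta_SB : SA * Mdelta * SB = Matrix.diagonal ![1,1,1,1,1,1,1,1,1,9] := by decide
lemma prod_nine : ∏ i, (![1,1,1,1,1,1,1,1,1,(9:ℤ)]) i = 9 := by
  simp [Fin.prod_univ_succ]
lemma Mdelta_mulVec_one : Mdelta *ᵥ (fun _ => (1 : ℤ)) = fun _ => 9 := by decide

lemma E10Pair_eq (a b : Fin 10 → ℤ) : E10Pair a b = a ⬝ᵥ (E10Gram *ᵥ b) := by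
  simp [E10Pair, dotProduct, Matrix.mulVec, Finset.mul_sum, mul_assoc]

/-- If `(f 0, …, f 9)` is a 10-tuple of vectors of `E₁₀` with `⟨f i, f j⟩ = 1 − δ_ij`,
then for every `v ∈ E₁₀` the integer `⟨v, f 0 + ⋯ + f 9⟩` is divisible by `3`. -/
theorem div_three (f : Fin 10 → Fin 10 → ℤ)
    (hf : ∀ i j, E10Pair (f i) (f j) = 1 - if i = j then 1 else 0)
    (v : Fin 10 → ℤ) :
    (3 : ℤ) ∣ E10Pair v (∑ i, f i) := by
  classical
  have hM : Matrix.of f * E10Gram * (Matrix.of f)ᵀ = Mdelta := by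
    ext i j
    have h := hf i j
    rw [E10Pair] at h
    rw [Finset.sum_comm] at h
    simp only [Matrix.mul_apply, Matrix.transpose_apply, Matrix.of_apply, Finset.sum_mul,
      Mdelta]
    rw [← h]
  have hs : (∑ i, f i) = (Matrix.of f)ᵀ *ᵥ (fun _ => 1) := by
    ext j
    simp [Matrix.mulVec, Matrix.transpose_apply, dotProduct, Finset.sum_apply]
  rw [E10Pair_eq, hs]
  exact master E10Gram_mul_inv SA_Mdelta_SB prod_nine SA_mul_SAi SB_mul_SBi hM
    Mdelta_mulVec_one v
end

section
/- Let (f_1, …, f_10) be a 10-tuple of vectors in E₁₀ such that ⟨f_i, f_j⟩ = 1 − δ_ij for all i, j, and let e ∈ E₁₀ be an isotropic vector (⟨e, e⟩ = 0) satisfying ⟨e, f_1⟩ = ⟨e, f_2⟩ = 2 and ⟨e, f_k⟩ = 1 for all 3 ≤ k ≤ 10. Then the vectors f_1, …, f_10 together with e generate E₁₀ as a ℤ-module, i.e. the ℤ-submodule of E₁₀ spanned by {f_1, …, f_10, e} is all of E₁₀. (Claim established in the proof of Corollary 2.5.) -/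
open Matrix BigOperators

lemma pair_expand (v w : Fin 10 → ℤ) : E10Pair v w = v ⬝ᵥ E10Gram.mulVec w := by
  simp [E10Pair, dotProduct, Matrix.mulVec, Finset.mul_sum, mul_assoc]

lemma pair_comm (v w : Fin 10 → ℤ) : E10Pair v w = E10Pair w v := by
  have h : ∀ i j, E10Gram i j = E10Gram j i := by
    intro i j; fin_cases i <;> fin_cases j <;> rfl
  unfold E10Pair
  rw [Finset.sum_comm]
  exact Finset.sum_congr rfl fun i _ => Finset.sum_congr rfl fun j _ => by rw [h i j]; ring

lemma pair_sub_right (v w u : Fin 10 → ℤ) :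
    E10Pair v (w - u) = E10Pair v w - E10Pair v u := by
  simp [pair_expand, Matrix.mulVec_sub, dotProduct_sub]

lemma pair_add_right (v w u : Fin 10 → ℤ) :
    E10Pair v (w + u) = E10Pair v w + E10Pair v u := by
  simp [pair_expand, Matrix.mulVec_add, dotProduct_add]

lemma pair_smul_right (c : ℤ) (v w : Fin 10 → ℤ) :
    E10Pair v (c • w) = c * E10Pair v w := by
  simp only [E10Pair, Pi.smul_apply, smul_eq_mul, Finset.mul_sum]
  exact Finset.sum_congr rfl fun i _ => Finset.sum_congr rfl fun j _ => by ring

lemma pair_zero_right (v : Fin 10 → ℤ) : E10Pair v 0 = 0 := by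
  simp [E10Pair]

lemma pair_sum_right (v : Fin 10 → ℤ) (g : Fin 10 → Fin 10 → ℤ) :
    E10Pair v (∑ j, g j) = ∑ j, E10Pair v (g j) := by
  classical
  induction (Finset.univ : Finset (Fin 10)) using Finset.induction with
  | empty => simp [E10Pair]
  | insert _ _ h ih => simp [Finset.sum_insert h, pair_add_right, ih]

lemma hMN : (Matrix.of fun i j => 1 - if i = j then (1:ℤ) else 0) *
    (Matrix.of fun i j => 1 - if i = j then (9:ℤ) else 0)
    = ((9:ℤ) • 1 : Matrix (Fin 10) (Fin 10) ℤ) := by decide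

/-- Integer inverse of `E10Gram`. -/
def E10GramInv : Matrix (Fin 10) (Fin 10) ℤ :=
  !![0, 1,  0,  0,  0,  0,  0,  0,  0,  0;
     1, 0,  0,  0,  0,  0,  0,  0,  0,  0;
     0, 0, -4, -7, -10, -8, -6, -4, -2, -5;
     0, 0, -7, -14, -20, -16, -12, -8, -4, -10;
     0, 0, -10, -20, -30, -24, -18, -12, -6, -15;
     0, 0, -8, -16, -24, -20, -15, -10, -5, -12;
     0, 0, -6, -12, -18, -15, -12, -8, -4, -9;
     0, 0, -4, -8, -12, -10, -8, -6, -3, -6;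
     0, 0, -2, -4, -6, -5, -4, -3, -2, -3;
     0, 0, -5, -10, -15, -12, -9, -6, -3, -8]

lemma hGinv : E10GramInv * E10Gram = 1 := by decide

lemma map_mulVec_cast (A : Matrix (Fin 10) (Fin 10) ℤ) (v : Fin 10 → ℤ) :
    (A.map (Int.cast : ℤ → ℚ)).mulVec (fun i => ((v i : ℤ) : ℚ))
      = fun i => ((A.mulVec v i : ℤ) : ℚ) := by
  funext i
  simp [Matrix.mulVec, dotProduct, Matrix.map_apply]

lemma map_mul_cast (A B : Matrix (Fin 10) (Fin 10) ℤ) :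
    (A * B).map (Int.cast : ℤ → ℚ)
      = A.map (Int.cast : ℤ → ℚ) * B.map (Int.cast : ℤ → ℚ) := by
  ext i j
  simp [Matrix.mul_apply, Matrix.map_apply]

lemma map_smul_one_cast :
    (((9:ℤ) • 1 : Matrix (Fin 10) (Fin 10) ℤ).map (Int.cast : ℤ → ℚ))
      = ((9:ℚ) • 1 : Matrix (Fin 10) (Fin 10) ℚ) := by
  ext i j
  rw [Matrix.map_apply, Matrix.smul_apply, Matrix.smul_apply, Matrix.one_apply, Matrix.one_apply]
  by_cases h : i = j <;> simp [h]

set_option maxRecDepth 2000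

/-- If `(f 0, …, f 9)` is a 10-tuple of vectors of `E₁₀` with `⟨f i, f j⟩ = 1 − δ_ij`
and `e` is an isotropic vector with `⟨e, f 0⟩ = ⟨e, f 1⟩ = 2` and `⟨e, f k⟩ = 1` for
`k ≥ 2`, then `f 0, …, f 9` together with `e` generate `E₁₀` as a ℤ-module. -/
theorem generate_E10 (f : Fin 10 → Fin 10 → ℤ)
    (hf : ∀ i j, E10Pair (f i) (f j) = 1 - if i = j then 1 else 0)
    (e : Fin 10 → ℤ)
    (he : E10Pair e e = 0)
    (he0 : E10Pair e (f 0) = 2) (he1 : E10Pair e (f 1) = 2)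
    (hek : ∀ k : Fin 10, 2 ≤ (k : ℕ) → E10Pair e (f k) = 1) :
    Submodule.span ℤ (Set.range f ∪ {e}) = ⊤ := by
  classical
  set F : Matrix (Fin 10) (Fin 10) ℤ := Matrix.of f with hF
  have hM : F * E10Gram * Fᵀ = Matrix.of (fun i j => 1 - if i = j then (1:ℤ) else 0) := by
    ext i j
    simp only [Matrix.of_apply]
    rw [← hf i j, pair_expand]
    simp [Matrix.mul_apply, dotProduct, Matrix.mulVec, Matrix.transpose_apply,
      Finset.sum_mul, Finset.mul_sum, mul_assoc, hF]
    rw [Finset.sum_comm]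
  have key : ∀ z : Fin 10 → ℤ, (∀ m, E10Pair (f m) z = 0) → z = 0 := by
    intro z hz
    have h0 : F.mulVec (E10Gram.mulVec z) = 0 := by
      funext m
      have hm : (F.mulVec (E10Gram.mulVec z)) m = E10Pair (f m) z := by
        rw [pair_expand]; rfl
      rw [hm, hz m]; rfl
    set N : Matrix (Fin 10) (Fin 10) ℤ :=
      Matrix.of (fun i j => 1 - if i = j then (9:ℤ) else 0) with hN
    have hFR : F * (E10Gram * Fᵀ * N) = (9:ℤ) • 1 := by
      rw [← Matrix.mul_assoc, ← Matrix.mul_assoc, hM, hMN]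
    have hFRq : (F.map (Int.cast : ℤ → ℚ)) * ((E10Gram * Fᵀ * N).map (Int.cast : ℤ → ℚ))
        = ((9:ℚ) • 1 : Matrix (Fin 10) (Fin 10) ℚ) := by
      have hcast : (F * (E10Gram * Fᵀ * N)).map (Int.cast : ℤ → ℚ)
          = ((9:ℤ) • 1 : Matrix (Fin 10) (Fin 10) ℤ).map (Int.cast : ℤ → ℚ) := by rw [hFR]
      rwa [map_mul_cast, map_smul_one_cast] at hcast
    have hone : (F.map (Int.cast : ℤ → ℚ)) * ((9:ℚ)⁻¹ • ((E10Gram * Fᵀ * N).map (Int.cast : ℤ → ℚ))) = 1 := by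
      rw [Matrix.mul_smul, hFRq, smul_smul]
      norm_num
    have hcomm := mul_eq_one_comm.mp hone
    have hFu : (F.map (Int.cast : ℤ → ℚ)).mulVec (fun i => ((E10Gram.mulVec z i : ℤ) : ℚ)) = 0 := by
      rw [map_mulVec_cast, h0]
      funext i
      simp
    have huq : (fun i => ((E10Gram.mulVec z i : ℤ) : ℚ)) = 0 := by
      rw [← Matrix.one_mulVec (fun i => ((E10Gram.mulVec z i : ℤ) : ℚ)), ← hcomm,
        ← Matrix.mulVec_mulVec, hFu, Matrix.mulVec_zero]
    have hu : E10Gram.mulVec z = 0 := by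
      funext i
      have h' := congrFun huq i
      simp only [Pi.zero_apply] at h' ⊢
      exact_mod_cast h'
    have hz0 : z = 0 := by
      rw [← Matrix.one_mulVec z, ← hGinv, ← Matrix.mulVec_mulVec, hu, Matrix.mulVec_zero]
    exact hz0
  -- generic: pairing f m against an arbitrary combination of the f's
  have hsum : ∀ (co : Fin 10 → ℤ) (m : Fin 10),
      ∑ j, co j * E10Pair (f m) (f j) = (∑ j, co j) - co m := by
    intro co m
    simp only [hf, mul_sub, mul_one, mul_ite, mul_zero]
    rw [Finset.sum_sub_distrib]
    congr 1
    simp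
  -- value of ⟨e, f m⟩ for every m
  have hg : ∀ m : Fin 10, E10Pair e (f m)
      = 1 + (if m = 0 then 1 else 0) + (if m = 1 then 1 else 0) := by
    intro m
    by_cases h0 : m = 0
    · subst h0; simp [he0]
    by_cases h1 : m = 1
    · subst h1; simp [he1]
    have hv0 : (m : ℕ) ≠ 0 := fun hh => h0 (Fin.ext (by simpa using hh))
    have hv1 : (m : ℕ) ≠ 1 := fun hh => h1 (Fin.ext (by simpa using hh))
    have h2 : 2 ≤ (m : ℕ) := by omega
    simp [hek m h2, h0, h1]
  -- the fundamental lattice relation  3e = -2f₀ - 2f₁ + Σ fₖ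
  set d : Fin 10 → ℤ :=
    fun j => 1 - (if j = 0 then 3 else 0) - (if j = 1 then 3 else 0) with hd
  have hDsum : (∑ j, d j) = 4 := by
    simp [hd, Finset.sum_sub_distrib, Finset.sum_ite_eq', Finset.card_univ]
  have hrel : (3:ℤ) • e - ∑ j, d j • f j = 0 := by
    apply key
    intro m
    rw [pair_sub_right, pair_smul_right, pair_sum_right]
    simp only [pair_smul_right]
    rw [hsum d m, hDsum, pair_comm (f m) e, hg m, hd]
    by_cases h0 : m = 0
    · subst h0; simp
    by_cases h1 : m = 1
    · subst h1; simp
    simp [h0, h1]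
  rw [eq_top_iff]
  rintro x -
  set p : Fin 10 → ℤ := fun j => E10Pair x (f j) with hp
  set Q : ℤ := E10Pair x e + p 0 + p 1 with hQ
  set c : Fin 10 → ℤ :=
    fun j => (if j = 0 then Q else 0) + (if j = 1 then Q else 0) - p j with hc
  -- pairing x with the relation
  have hxrel : 3 * E10Pair x e - ∑ j, d j * p j = 0 := by
    have h := congrArg (E10Pair x) hrel
    rwa [pair_sub_right, pair_smul_right, pair_sum_right, pair_zero_right,
      Finset.sum_congr rfl (fun j _ => pair_smul_right (d j) x (f j))] at h
  have hP : (∑ j, p j) = 3 * Q := by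
    have : ∑ j, d j * p j = (∑ j, p j) - 3 * p 0 - 3 * p 1 := by
      simp [hd, sub_mul, one_mul, ite_mul, zero_mul, Finset.sum_sub_distrib,
        Finset.sum_ite_eq']
    rw [this] at hxrel
    rw [hQ]
    linarith
  have hC : (∑ j, c j) = -Q := by
    have : ∑ j, c j = Q + Q - ∑ j, p j := by
      simp [hc, Finset.sum_add_distrib, Finset.sum_sub_distrib, Finset.sum_ite_eq']
    rw [this, hP]
    ring
  have hx : x = (∑ j, c j • f j) + Q • e := by
    have hz : ∀ m, E10Pair (f m) (x - ((∑ j, c j • f j) + Q • e)) = 0 := by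
      intro m
      rw [pair_sub_right, pair_add_right, pair_sum_right]
      simp only [pair_smul_right]
      rw [hsum c m, hC, pair_comm (f m) x, pair_comm (f m) e, hg m, hc]
      show p m - (-Q - _ + Q * _) = 0
      by_cases h0 : m = 0
      · subst h0; simp; ring
      by_cases h1 : m = 1
      · subst h1; simp; ring
      simp [h0, h1]
    have h0 := key _ hz
    exact sub_eq_zero.mp h0
  rw [hx]
  apply Submodule.add_mem
  · exact Submodule.sum_mem _ fun j _ =>
      Submodule.smul_mem _ _ (Submodule.subset_span (Or.inl ⟨j, rfl⟩))
  · exact Submodule.smul_mem _ _ (Submodule.subset_span (Or.inr rfl))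
end
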